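/- For every k ≥ 1 and all p, q ∈ D(k) with p ≠ q, one has d(p,q) = 1 if and only if the set {x ∈ Fin (2k) : p x ≠ q x} has exactly 4 elements, i.e., if and only if all strings of p and q are identical except two blocks of p and two blocks of q. -/

import Mathlib

open scoped BigOperators

/-- Non-crossing pair partitions of {1,…,2k}: fixed-point-free non-crossing
involutions of `Fin (2*k)`. -/
def NCPair (k : ℕ) : Type :=
  {p : Equiv.Perm (Fin (2 * k)) //
    (∀ x, p (p x) = x) ∧ (∀ x, p x ≠ x) ∧
    ∀ a b c d : Fin (2 * k), a < b → b < c → c < d → p a = c → p b = d → False}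

instance (k : ℕ) : Fintype (NCPair k) := by unfold NCPair; infer_instance

instance (k : ℕ) : DecidableEq (NCPair k) := by unfold NCPair; infer_instance

/-- `loops p q`: the number of loops obtained by closing the composed diagram,
i.e. the number of orbits of the subgroup generated by `p` and `q` on `Fin (2*k)`. -/
noncomputable def loops {k : ℕ} (p q : NCPair k) : ℕ :=
  Nat.card (MulAction.orbitRel.Quotient
    (↥(Subgroup.closure ({p.1, q.1} : Set (Equiv.Perm (Fin (2 * k)))))) (Fin (2 * k)))

/-- The Gram matrix `G_{kn}(p,q) = n^{l(p,q)}`. -/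
noncomputable def Gram (k n : ℕ) : Matrix (NCPair k) (NCPair k) ℝ :=
  fun p q => (n : ℝ) ^ loops p q

/-- The loop distance `d(p,q) = k - l(p,q)`. -/
noncomputable def loopDist {k : ℕ} (p q : NCPair k) : ℕ := k - loops p q

namespace LoopAux

variable {k : ℕ} (p q : NCPair k)

def G (p q : NCPair k) : Subgroup (Equiv.Perm (Fin (2 * k))) := Subgroup.closure {p.1, q.1}

abbrev Q (p q : NCPair k) := MulAction.orbitRel.Quotient (↥(G p q)) (Fin (2 * k))

def mk (p q : NCPair k) (x : Fin (2 * k)) : Q p q := Quotient.mk'' x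

lemma hpG : p.1 ∈ G p q := Subgroup.subset_closure (by simp)
lemma hqG : q.1 ∈ G p q := Subgroup.subset_closure (by simp)

lemma mk_p (x : Fin (2 * k)) : mk p q (p.1 x) = mk p q x :=
  Quotient.eq''.mpr (MulAction.orbitRel_apply.mpr ⟨⟨p.1, hpG p q⟩, rfl⟩)

lemma mk_q (x : Fin (2 * k)) : mk p q (q.1 x) = mk p q x :=
  Quotient.eq''.mpr (MulAction.orbitRel_apply.mpr ⟨⟨q.1, hqG p q⟩, rfl⟩)

end LoopAux

namespace LoopAux
variable {k : ℕ} (p q : NCPair k)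

lemma key (x : Fin (2 * k)) (hx : p.1 x = q.1 x) (g : Equiv.Perm (Fin (2 * k)))
    (hg : g ∈ G p q) :
    g x ∈ ({x, p.1 x} : Set (Fin (2 * k))) ∧
      g (p.1 x) ∈ ({x, p.1 x} : Set (Fin (2 * k))) := by
  induction hg using Subgroup.closure_induction with
  | mem y hy =>
    rcases hy with rfl | rfl
    · exact ⟨Or.inr rfl, Or.inl (p.2.1 x)⟩
    · refine ⟨Or.inr hx.symm, Or.inl ?_⟩
      rw [hx]; exact q.2.1 x
  | one => exact ⟨Or.inl rfl, Or.inr rfl⟩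
  | mul y z hy hz ihy ihz =>
    constructor
    · rcases ihz.1 with h | h <;> rw [Equiv.Perm.mul_apply, h]
      · exact ihy.1
      · exact ihy.2
    · rcases ihz.2 with h | h <;> rw [Equiv.Perm.mul_apply, h]
      · exact ihy.1
      · exact ihy.2
  | inv y hy ihy =>
    have hne : p.1 x ≠ x := p.2.2.1 x
    have inv_of : ∀ a b : Fin (2 * k), y a = b → y⁻¹ b = a := fun a b h => by
      rw [← h]; exact Equiv.symm_apply_apply y a
    rcases ihy.1 with h1 | h1 <;> rcases ihy.2 with h2 | h2
    · exact absurd (y.injective (h1.trans h2.symm)).symm hne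
    · exact ⟨Or.inl (inv_of _ _ h1), Or.inr (inv_of _ _ h2)⟩
    · exact ⟨Or.inr (inv_of _ _ h2), Or.inl (inv_of _ _ h1)⟩
    · exact absurd (y.injective (h1.trans h2.symm)) hne.symm

lemma fiber_agree (x : Fin (2 * k)) (hx : p.1 x = q.1 x) (y : Fin (2 * k))
    (hy : mk p q y = mk p q x) : y = x ∨ y = p.1 x := by
  obtain ⟨g, hg⟩ := MulAction.orbitRel_apply.mp (Quotient.eq''.mp hy)
  have := key p q x hx g.1 g.2
  rw [show g.1 x = y from hg] at this
  exact this.1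

end LoopAux

namespace LoopAux

open scoped Classical

variable {k : ℕ} (p q : NCPair k)

noncomputable def F (o : Q p q) : Finset (Fin (2 * k)) :=
  Finset.univ.filter (fun y => mk p q y = o)

noncomputable def Fd (o : Q p q) : Finset (Fin (2 * k)) :=
  Finset.univ.filter (fun y => p.1 y ≠ q.1 y ∧ mk p q y = o)

lemma main (o : Q p q) :
    ((F p q o).card = 2 ∧ (Fd p q o).card = 0) ∨
      (4 ≤ (F p q o).card ∧ (Fd p q o).card = (F p q o).card) := by
  induction o using Quotient.inductionOn' with
  | h x =>
  have hpp := p.2.1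
  have hqq := q.2.1
  have hpne := p.2.2.1
  have hqne := q.2.2.1
  by_cases hx : p.1 x = q.1 x
  · left
    have hF : F p q (Quotient.mk'' x) = {x, p.1 x} := by
      ext y
      simp only [F, Finset.mem_filter, Finset.mem_univ, true_and, Finset.mem_insert,
        Finset.mem_singleton]
      constructor
      · exact fiber_agree p q x hx y
      · rintro (rfl | rfl)
        · rfl
        · exact mk_p p q x
    constructor
    · rw [hF, Finset.card_pair (Ne.symm (hpne x))]
    · rw [Finset.card_eq_zero, Finset.eq_empty_iff_forall_notMem]
      intro y hy
      simp only [Fd, Finset.mem_filter, Finset.mem_univ, true_and] at hy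
      rcases fiber_agree p q x hx y hy.2 with rfl | rfl
      · exact hy.1 hx
      · apply hy.1
        rw [hpp x, hx, hqq x]
  · right
    have hall : ∀ y, mk p q y = mk p q x → p.1 y ≠ q.1 y := by
      intro y hy hagree
      rcases fiber_agree p q y hagree x hy.symm with rfl | hxy
      · exact hx hagree
      · apply hx
        rw [hxy, hpp y, hagree, hqq y]
    constructor
    · have h1 : p.1 x ≠ x := hpne x
      have h2 : q.1 x ≠ x := hqne x
      have h3 : q.1 x ≠ p.1 x := fun h => hx h.symm
      have h4 : q.1 (p.1 x) ≠ x := fun h => h3 (by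
        calc q.1 x = q.1 (q.1 (p.1 x)) := by rw [h]
        _ = p.1 x := hqq _)
      have h5 : q.1 (p.1 x) ≠ p.1 x := hqne _
      have h6 : q.1 (p.1 x) ≠ q.1 x := fun h => h1 (q.1.injective h)
      have hsub : ({x, p.1 x, q.1 x, q.1 (p.1 x)} : Finset (Fin (2 * k))) ⊆
          F p q (Quotient.mk'' x) := by
        intro y hy
        simp only [Finset.mem_insert, Finset.mem_singleton] at hy
        simp only [F, Finset.mem_filter, Finset.mem_univ, true_and]
        rcases hy with rfl | rfl | rfl | rfl
        · rfl
        · exact mk_p p q x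
        · exact mk_q p q x
        · exact (mk_q p q (p.1 x)).trans (mk_p p q x)
      have hc : ({x, p.1 x, q.1 x, q.1 (p.1 x)} : Finset (Fin (2 * k))).card = 4 := by
        rw [Finset.card_insert_of_notMem, Finset.card_insert_of_notMem,
          Finset.card_insert_of_notMem, Finset.card_singleton]
        all_goals
          simp [h1, h2, h3, h4, h5, h6, Ne.symm h1, Ne.symm h2, Ne.symm h3,
            Ne.symm h4, Ne.symm h5, Ne.symm h6]
      calc 4 = ({x, p.1 x, q.1 x, q.1 (p.1 x)} : Finset (Fin (2 * k))).card := hc.symm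
      _ ≤ _ := Finset.card_le_card hsub
    · have : Fd p q (Quotient.mk'' x) = F p q (Quotient.mk'' x) := by
        ext y
        simp only [Fd, F, Finset.mem_filter, Finset.mem_univ, true_and]
        exact ⟨And.right, fun h => ⟨hall y h, h⟩⟩
      rw [this]

lemma sum_F : ∑ o : Q p q, (F p q o).card = 2 * k := by
  have h := Finset.card_eq_sum_card_fiberwise
    (f := mk p q) (s := Finset.univ) (t := Finset.univ) (fun x _ => Finset.mem_univ _)
  rw [Finset.card_univ, Fintype.card_fin] at h
  exact h.symm

lemma sum_Fd : (Finset.univ.filter (fun x : Fin (2 * k) => p.1 x ≠ q.1 x)).card =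
    ∑ o : Q p q, (Fd p q o).card := by
  have h := Finset.card_eq_sum_card_fiberwise
    (f := mk p q) (s := Finset.univ.filter (fun x : Fin (2 * k) => p.1 x ≠ q.1 x))
    (t := Finset.univ) (fun x _ => Finset.mem_univ _)
  rw [h]
  refine Finset.sum_congr rfl fun o _ => ?_
  rw [Finset.filter_filter]
  rfl

end LoopAux

/-- For p ≠ q in D(k), d(p,q) = 1 iff p and q differ in exactly 4 points,
i.e. all strings of p and q are identical except two blocks of each. -/
theorem loopDist_eq_one_iff (k : ℕ) (hk : 1 ≤ k) (p q : NCPair k) (hpq : p ≠ q) :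
    loopDist p q = 1 ↔
      (Finset.univ.filter (fun x : Fin (2 * k) => p.1 x ≠ q.1 x)).card = 4 := by

  classical
  have hloops : loops p q = (Finset.univ : Finset (LoopAux.Q p q)).card := by
    rw [Finset.card_univ]
    exact Nat.card_eq_fintype_card
  have hsumF := LoopAux.sum_F p q
  have hsumFd := LoopAux.sum_Fd p q
  set B := Finset.univ.filter (fun o : LoopAux.Q p q => 4 ≤ (LoopAux.F p q o).card) with hB
  set A := Finset.univ.filter (fun o : LoopAux.Q p q => ¬ 4 ≤ (LoopAux.F p q o).card) with hA
  have hAcard : ∀ o ∈ A, (LoopAux.F p q o).card = 2 := by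
    intro o ho
    rcases LoopAux.main p q o with h | h
    · exact h.1
    · rw [hA, Finset.mem_filter] at ho
      exact absurd h.1 ho.2
  have hAFd : ∀ o ∈ A, (LoopAux.Fd p q o).card = 0 := by
    intro o ho
    rcases LoopAux.main p q o with h | h
    · exact h.2
    · rw [hA, Finset.mem_filter] at ho
      exact absurd h.1 ho.2
  have hBFd : ∀ o ∈ B, (LoopAux.Fd p q o).card = (LoopAux.F p q o).card := by
    intro o ho
    rcases LoopAux.main p q o with h | h
    · rw [hB, Finset.mem_filter] at ho
      omega
    · exact h.2
  have hsplit : (∑ o ∈ B, (LoopAux.F p q o).card) + ∑ o ∈ A, (LoopAux.F p q o).card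
      = 2 * k := by
    rw [hB, hA, Finset.sum_filter_add_sum_filter_not]
    exact hsumF
  have hAsum : ∑ o ∈ A, (LoopAux.F p q o).card = 2 * A.card := by
    rw [Finset.sum_congr rfl hAcard, Finset.sum_const, smul_eq_mul, mul_comm]
  have hDsum : (Finset.univ.filter fun x : Fin (2 * k) => p.1 x ≠ q.1 x).card
      = ∑ o ∈ B, (LoopAux.F p q o).card := by
    rw [hsumFd, ← Finset.sum_filter_add_sum_filter_not Finset.univ
      (fun o : LoopAux.Q p q => 4 ≤ (LoopAux.F p q o).card)
      (fun o => (LoopAux.Fd p q o).card), ← hB, ← hA,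
      Finset.sum_congr rfl hBFd, Finset.sum_eq_zero hAFd, add_zero]
  have hBle : 4 * B.card ≤ ∑ o ∈ B, (LoopAux.F p q o).card := by
    calc 4 * B.card = ∑ _o ∈ B, 4 := by rw [Finset.sum_const, smul_eq_mul, mul_comm]
    _ ≤ _ := Finset.sum_le_sum (fun o ho => by
      rw [hB, Finset.mem_filter] at ho
      exact ho.2)
  have hcardsplit : B.card + A.card = (Finset.univ : Finset (LoopAux.Q p q)).card := by
    rw [hB, hA]
    exact Finset.card_filter_add_card_filter_not _
  rw [show loopDist p q = k - loops p q from rfl, hloops, ← hcardsplit, hDsum]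
  rcases Nat.eq_zero_or_pos B.card with hb | hb
  · have hz : ∑ o ∈ B, (LoopAux.F p q o).card = 0 := by
      rw [Finset.card_eq_zero.mp hb, Finset.sum_empty]
    omega
  · omega
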